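/- Let W be a Coxeter group and J, K ⊆ I. The orbits of the left W_J-action on the coset space W/W_K are in natural bijection with the set ᴶWᴷ of minimal-length (W_J, W_K)-double coset representatives; moreover, the orbit of the coset w·W_K for w ∈ ᴶWᴷ is isomorphic as a W_J-set to W_J/(W_J ∩ w·W_K·w⁻¹). -/

import Mathlib

/-- The standard parabolic subgroup of a Coxeter group generated by the
simple reflections indexed by `J`. -/
def CoxeterSystem.parabolic {B W : Type*} [Group W] {M : CoxeterMatrix B}
    (cs : CoxeterSystem M W) (J : Set B) : Subgroup W :=
  Subgroup.closure (cs.simple '' J)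

/-- A predicate asserting that `w` is a minimal-length `(W_J, W_K)`-double coset
representative. -/
def CoxeterSystem.IsMinDoubleCosetRep {B W : Type*} [Group W] {M : CoxeterMatrix B}
    (cs : CoxeterSystem M W) (J K : Set B) (w : W) : Prop :=
  ∀ a ∈ cs.parabolic J, ∀ b ∈ cs.parabolic K, cs.length w ≤ cs.length (a * w * b)


namespace DC
open List CoxeterSystem

variable {B W : Type*} [Group W] {M : CoxeterMatrix B} (cs : CoxeterSystem M W)

theorem ris_cons (i : B) (ω : List B) :
    cs.rightInvSeq (i :: ω) =
      ((cs.wordProd ω)⁻¹ * cs.simple i * cs.wordProd ω) :: cs.rightInvSeq ω := rfl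

theorem two_eq_zero : (1 + 1 : ZMod 2) = 0 := by decide

open scoped Classical in
/-- The permutation of `W × ZMod 2` associated to a simple reflection. -/
noncomputable def perm (i : B) : Equiv.Perm (W × ZMod 2) :=
  Function.Involutive.toPerm
    (fun x => (cs.simple i * x.1 * cs.simple i, x.2 + if x.1 = cs.simple i then 1 else 0))
    (by
      rintro ⟨u, z⟩
      simp only [Prod.mk.injEq]
      constructor
      · rw [← mul_assoc, ← mul_assoc, cs.simple_mul_simple_self,
          one_mul, mul_assoc, cs.simple_mul_simple_self, mul_one]
      · have h1 : (cs.simple i * u * cs.simple i = cs.simple i) ↔ u = cs.simple i := by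
          constructor
          · intro h
            have := congrArg (fun y => cs.simple i * y * cs.simple i) h
            rw [← mul_assoc, ← mul_assoc, cs.simple_mul_simple_self, one_mul,
              mul_assoc, cs.simple_mul_simple_self, mul_one] at this
            rw [this, one_mul]
          · intro h; rw [h, cs.simple_mul_simple_self, one_mul]
        rw [if_congr h1 rfl rfl]
        rcases em (u = cs.simple i) with h | h
        · rw [if_pos h, add_assoc, two_eq_zero, add_zero]
        · rw [if_neg h, add_zero, add_zero])

open scoped Classical in
theorem perm_apply (i : B) (x : W × ZMod 2) :
    perm cs i x = (cs.simple i * x.1 * cs.simple i, x.2 + if x.1 = cs.simple i then 1 else 0) :=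
  rfl

open scoped Classical in
/-- The number of times (mod 2) that `x` occurs in the right inversion sequence of `ω`. -/
noncomputable def eps (ω : List B) (x : W) : ZMod 2 :=
  ((cs.rightInvSeq ω).map (fun t => if t = x then (1 : ZMod 2) else 0)).sum

@[simp] theorem eps_nil (x : W) : eps cs [] x = 0 := by simp [eps]

open scoped Classical in
theorem eps_cons (i : B) (ω : List B) (x : W) :
    eps cs (i :: ω) x =
      (if (cs.wordProd ω)⁻¹ * cs.simple i * cs.wordProd ω = x then 1 else 0) + eps cs ω x := by
  rw [eps, ris_cons, map_cons, sum_cons]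
  congr 1

open scoped Classical in
theorem prod_map_perm (ω : List B) (x : W × ZMod 2) :
    ((ω.map (perm cs)).prod) x =
      (cs.wordProd ω * x.1 * (cs.wordProd ω)⁻¹, x.2 + eps cs ω x.1) := by
  induction ω with
  | nil => simp
  | cons i ω ih =>
      rw [map_cons, prod_cons, Equiv.Perm.mul_apply, ih, perm_apply, eps_cons,
        cs.wordProd_cons]
      simp only [Prod.mk.injEq]
      constructor
      · rw [mul_inv_rev, cs.inv_simple]; group
      · have h1 : (cs.wordProd ω * x.1 * (cs.wordProd ω)⁻¹ = cs.simple i)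
            ↔ ((cs.wordProd ω)⁻¹ * cs.simple i * cs.wordProd ω = x.1) := by
          constructor
          · intro h; rw [← h]; group
          · intro h; rw [← h]; group
        rw [if_congr h1 rfl rfl]; ring

end DC

namespace DC
open List CoxeterSystem

variable {B W : Type*} [Group W] {M : CoxeterMatrix B} (cs : CoxeterSystem M W)

/-- The `k`-th entry (from the right) of the right inversion sequence of an
alternating word. -/
def altEntry (i j : B) (k : ℕ) : W :=
  (cs.wordProd (alternatingWord i j k))⁻¹ *
    (if Even k then cs.simple j else cs.simple i) * cs.wordProd (alternatingWord i j k)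

theorem ris_alternatingWord (i j : B) (n : ℕ) :
    cs.rightInvSeq (alternatingWord i j n) = ((List.range n).reverse).map (altEntry cs i j) := by
  induction n with
  | zero => simp [alternatingWord]
  | succ n ih =>
      rw [alternatingWord_succ', ris_cons, ih, range_succ, reverse_append]
      simp [altEntry, apply_ite cs.simple]

theorem simple_conj_pow (i j : B) (q : ℕ) :
    cs.simple j * (cs.simple i * cs.simple j) ^ q
      = ((cs.simple i * cs.simple j)⁻¹) ^ q * cs.simple j := by
  have hbase : cs.simple j * (cs.simple i * cs.simple j)
      = (cs.simple i * cs.simple j)⁻¹ * cs.simple j := by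
    rw [mul_inv_rev, cs.inv_simple, cs.inv_simple]; group
  induction q with
  | zero => simp
  | succ q ih =>
      rw [pow_succ' (cs.simple i * cs.simple j), ← mul_assoc, hbase, mul_assoc,
        ih, ← mul_assoc, ← pow_succ']

theorem altEntry_eq (i j : B) (k : ℕ) :
    altEntry cs i j k = cs.simple j * (cs.simple i * cs.simple j) ^ k := by
  rw [altEntry, cs.prod_alternatingWord_eq_mul_pow]
  rcases Nat.even_or_odd k with he | ho
  · rw [if_pos he, if_pos he, one_mul]
    obtain ⟨q, rfl⟩ := he
    have hq : (q + q) / 2 = q := by omega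
    rw [hq, ← inv_pow, mul_assoc, simple_conj_pow cs i j q, simple_conj_pow cs i j (q + q),
      ← mul_assoc, ← pow_add]
  · have hne : ¬ Even k := Nat.not_even_iff_odd.mpr ho
    rw [if_neg hne, if_neg hne]
    obtain ⟨q, rfl⟩ := ho
    have hq : (2 * q + 1) / 2 = q := by omega
    have hmid : cs.simple j * cs.simple i * cs.simple j
        = (cs.simple i * cs.simple j)⁻¹ * cs.simple j := by
      rw [mul_inv_rev, cs.inv_simple, cs.inv_simple]
    rw [hq, mul_inv_rev, ← inv_pow, cs.inv_simple]
    calc ((cs.simple i * cs.simple j)⁻¹) ^ q * cs.simple j * cs.simple i *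
          (cs.simple j * (cs.simple i * cs.simple j) ^ q)
        = ((cs.simple i * cs.simple j)⁻¹) ^ q * ((cs.simple j * cs.simple i * cs.simple j) *
            (cs.simple i * cs.simple j) ^ q) := by group
      _ = ((cs.simple i * cs.simple j)⁻¹) ^ q * (((cs.simple i * cs.simple j)⁻¹ * cs.simple j) *
            (cs.simple i * cs.simple j) ^ q) := by rw [hmid]
      _ = ((cs.simple i * cs.simple j)⁻¹) ^ (q + 1) *
            (cs.simple j * (cs.simple i * cs.simple j) ^ q) := by
            simp only [pow_succ, mul_assoc]
      _ = ((cs.simple i * cs.simple j)⁻¹) ^ (q + 1) *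
            (((cs.simple i * cs.simple j)⁻¹) ^ q * cs.simple j) := by
            rw [simple_conj_pow cs i j q]
      _ = ((cs.simple i * cs.simple j)⁻¹) ^ (2 * q + 1) * cs.simple j := by
            rw [← mul_assoc, ← pow_add]
            congr 2
            omega
      _ = cs.simple j * (cs.simple i * cs.simple j) ^ (2 * q + 1) := by
            rw [simple_conj_pow cs i j (2 * q + 1)]

theorem altEntry_add_M (i j : B) (k : ℕ) :
    altEntry cs i j (k + M i j) = altEntry cs i j k := by
  rw [altEntry_eq, altEntry_eq, pow_add, cs.simple_mul_simple_pow, mul_one]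

open scoped Classical in
theorem eps_alternatingWord (i j : B) (x : W) :
    eps cs (alternatingWord i j (2 * M i j)) x = 0 := by
  rw [eps, ris_alternatingWord, map_reverse, map_reverse, sum_reverse]
  have h2 : 2 * M i j = M i j + M i j := by ring
  have hsplit : (List.range (M i j + M i j)).map (altEntry cs i j)
      = (List.range (M i j)).map (altEntry cs i j)
        ++ (List.range (M i j)).map (altEntry cs i j) := by
    rw [range_add, map_append, map_map]
    congr 1
    apply map_congr_left
    intro k _
    simp only [Function.comp_apply]
    rw [Nat.add_comm (M i j) k, altEntry_add_M]
  rw [h2, hsplit, map_append, sum_append]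
  exact CharTwo.add_self_eq_zero _

theorem alternatingWord_two_mul_succ (i j : B) (m : ℕ) :
    alternatingWord i j (2 * (m + 1)) = i :: j :: alternatingWord i j (2 * m) := by
  have h1 : 2 * (m + 1) = (2 * m + 1) + 1 := by ring
  rw [h1, alternatingWord_succ', alternatingWord_succ']
  simp [Nat.even_add_one, Nat.even_mul]

theorem prod_map_perm_alternatingWord (i j : B) (m : ℕ) :
    ((alternatingWord i j (2 * m)).map (perm cs)).prod = (perm cs i * perm cs j) ^ m := by
  induction m with
  | zero => simp [alternatingWord]
  | succ m ih =>
      rw [alternatingWord_two_mul_succ, map_cons, map_cons, prod_cons, prod_cons, ih,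
        pow_succ', mul_assoc]

theorem perm_liftable : M.IsLiftable (perm cs) := by
  intro i j
  rw [← prod_map_perm_alternatingWord]
  ext x
  · rw [prod_map_perm]
    have hπ : cs.wordProd (alternatingWord i j (2 * M i j)) = 1 := by
      rw [cs.prod_alternatingWord_eq_mul_pow]
      have : Even (2 * M i j) := even_two_mul _
      rw [if_pos this]
      have h2 : 2 * M i j / 2 = M i j := by omega
      rw [h2, one_mul, cs.simple_mul_simple_pow]
    rw [hπ, eps_alternatingWord]
    simp
  · rw [prod_map_perm]
    have hπ : cs.wordProd (alternatingWord i j (2 * M i j)) = 1 := by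
      rw [cs.prod_alternatingWord_eq_mul_pow]
      have : Even (2 * M i j) := even_two_mul _
      rw [if_pos this]
      have h2 : 2 * M i j / 2 = M i j := by omega
      rw [h2, one_mul, cs.simple_mul_simple_pow]
    rw [hπ, eps_alternatingWord]
    simp

end DC

namespace DC
open List CoxeterSystem

variable {B W : Type*} [Group W] {M : CoxeterMatrix B} (cs : CoxeterSystem M W)

/-- The canonical homomorphism from `W` to the permutations of `W × ZMod 2`. -/
noncomputable def phi : W →* Equiv.Perm (W × ZMod 2) := cs.lift ⟨perm cs, perm_liftable cs⟩

theorem phi_wordProd (ω : List B) : phi cs (cs.wordProd ω) = (ω.map (perm cs)).prod := by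
  induction ω with
  | nil => simp [phi]
  | cons i ω ih =>
      rw [cs.wordProd_cons, map_mul, ih, map_cons, prod_cons]
      congr 1
      simp [phi]

theorem eps_eq_of_wordProd_eq {ω ω' : List B} (h : cs.wordProd ω = cs.wordProd ω') (x : W) :
    eps cs ω x = eps cs ω' x := by
  have h1 := prod_map_perm cs ω (x, 0)
  have h2 := prod_map_perm cs ω' (x, 0)
  rw [← phi_wordProd] at h1 h2
  rw [h] at h1
  have h3 := h1.symm.trans h2
  have h4 := congrArg Prod.snd h3
  simpa using h4

theorem mem_ris_of_eps_ne_zero {ω : List B} {x : W} (h : eps cs ω x ≠ 0) :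
    x ∈ cs.rightInvSeq ω := by
  by_contra hx
  apply h
  rw [eps]
  apply List.sum_eq_zero
  intro y hy
  obtain ⟨t, ht, rfl⟩ := List.mem_map.mp hy
  rw [if_neg]
  rintro rfl
  exact hx ht

theorem eps_descent {w : W} {i : B} (hlt : cs.length (w * cs.simple i) < cs.length w)
    {ω : List B} (hω : cs.wordProd ω = w) : eps cs ω (cs.simple i) ≠ 0 := by
  obtain ⟨α, hαl, hαp⟩ := cs.exists_reduced_word (w * cs.simple i)
  have hred : cs.IsReduced α := hαl
  have hα0 : eps cs α (cs.simple i) = 0 := by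
    by_contra h0
    have hinv := cs.isRightInversion_of_mem_rightInvSeq hred (mem_ris_of_eps_ne_zero cs h0)
    have h2 := hinv.2
    rw [← hαp, mul_assoc, cs.simple_mul_simple_self, mul_one] at h2
    omega
  have hconcat : cs.wordProd (α.concat i) = w := by
    rw [cs.wordProd_concat, ← hαp, mul_assoc, cs.simple_mul_simple_self, mul_one]
  classical
  have hpt : ∀ t : W, (if (MulAut.conj (cs.simple i)) t = cs.simple i then (1:ZMod 2) else 0)
      = if t = cs.simple i then (1:ZMod 2) else 0 := by
    intro t
    have hiff : (MulAut.conj (cs.simple i)) t = cs.simple i ↔ t = cs.simple i := by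
      constructor
      · intro h
        have : (MulAut.conj (cs.simple i)) t = (MulAut.conj (cs.simple i)) (cs.simple i) := by
          rw [h]; simp [MulAut.conj_apply]
        exact (MulAut.conj (cs.simple i)).injective this
      · rintro rfl; simp [MulAut.conj_apply]
    rw [if_congr hiff rfl rfl]
  have hstep : eps cs (α.concat i) (cs.simple i) = eps cs α (cs.simple i) + 1 := by
    rw [eps, eps, cs.rightInvSeq_concat, concat_eq_append, map_append, sum_append, map_map]
    simp only [map_cons, map_nil, sum_cons, sum_nil, if_pos rfl, add_zero]
    congr 1
    have hfun : ((fun t => if t = cs.simple i then (1:ZMod 2) else 0)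
        ∘ (MulAut.conj (cs.simple i))) = (fun t => if t = cs.simple i then (1:ZMod 2) else 0) :=
      funext hpt
    rw [hfun]
  have hval : eps cs ω (cs.simple i) = 1 := by
    rw [eps_eq_of_wordProd_eq cs (hω.trans hconcat.symm), hstep, hα0, zero_add]
  rw [hval]
  exact one_ne_zero

theorem right_exchange {w : W} {i : B} (hlt : cs.length (w * cs.simple i) < cs.length w)
    {ω : List B} (hω : cs.wordProd ω = w) :
    ∃ ω', ω' <+ ω ∧ ω'.length + 1 = ω.length ∧ cs.wordProd ω' = w * cs.simple i := by
  have hmem : cs.simple i ∈ cs.rightInvSeq ω :=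
    mem_ris_of_eps_ne_zero cs (eps_descent cs hlt hω)
  obtain ⟨j, hj, hget⟩ := List.mem_iff_getElem.mp hmem
  have hjlen : j < ω.length := by simpa using hj
  refine ⟨ω.eraseIdx j, List.eraseIdx_sublist ω j, List.length_eraseIdx_add_one hjlen, ?_⟩
  have h1 := cs.wordProd_mul_getD_rightInvSeq ω j
  rw [List.getD_eq_getElem _ _ hj, hget, hω] at h1
  exact h1.symm

theorem left_exchange {w : W} {i : B} (hlt : cs.length (cs.simple i * w) < cs.length w)
    {ω : List B} (hω : cs.wordProd ω = w) :
    ∃ ω', ω' <+ ω ∧ ω'.length + 1 = ω.length ∧ cs.wordProd ω' = cs.simple i * w := by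
  have h1 : cs.length (w⁻¹ * cs.simple i) < cs.length w⁻¹ := by
    have : (w⁻¹ * cs.simple i)⁻¹ = cs.simple i * w := by
      rw [mul_inv_rev, inv_inv, cs.inv_simple]
    calc cs.length (w⁻¹ * cs.simple i) = cs.length ((w⁻¹ * cs.simple i)⁻¹) :=
          (cs.length_inv _).symm
      _ = cs.length (cs.simple i * w) := by rw [this]
      _ < cs.length w := hlt
      _ = cs.length w⁻¹ := (cs.length_inv _).symm
  have hrev : cs.wordProd ω.reverse = w⁻¹ := by rw [cs.wordProd_reverse, hω]
  obtain ⟨γ, hsub, hlen, hprod⟩ := right_exchange cs h1 hrev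
  refine ⟨γ.reverse, ?_, ?_, ?_⟩
  · have := hsub.reverse
    rwa [reverse_reverse] at this
  · rw [length_reverse]
    rw [length_reverse] at hlen
    omega
  · rw [cs.wordProd_reverse, hprod, mul_inv_rev, inv_inv, cs.inv_simple]

end DC

namespace DC
open List CoxeterSystem

variable {B W : Type*} [Group W] {M : CoxeterMatrix B} (cs : CoxeterSystem M W)

private theorem exists_reduced_subword_aux (n : ℕ) : ∀ (ω : List B), ω.length ≤ n →
    ∃ ω', ω' ⊆ ω ∧ cs.IsReduced ω' ∧ cs.wordProd ω' = cs.wordProd ω := by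
  induction n with
  | zero =>
      intro ω hlen
      have : ω = [] := List.eq_nil_of_length_eq_zero (by omega)
      subst this
      exact ⟨[], by simp, by simp [CoxeterSystem.IsReduced], rfl⟩
  | succ n ih =>
      intro ω hlen
      by_cases hred : cs.IsReduced ω
      · exact ⟨ω, List.Subset.refl ω, hred, rfl⟩
      rcases ω.eq_nil_or_concat with rfl | ⟨α, i, rfl⟩
      · exact absurd (by simp [CoxeterSystem.IsReduced]) hred
      have hlenc : (α.concat i).length = α.length + 1 := by simp
      by_cases hα : cs.IsReduced α
      · have hlt : cs.length (cs.wordProd α * cs.simple i) < cs.length (cs.wordProd α) := by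
          rcases cs.length_mul_simple (cs.wordProd α) i with h | h
          · exfalso
            apply hred
            rw [CoxeterSystem.IsReduced, cs.wordProd_concat, h, hα, hlenc]
          · rw [hα] at h ⊢
            omega
        obtain ⟨γ, hsub, hγlen, hγprod⟩ := right_exchange cs hlt rfl
        obtain ⟨ω', hsub', hred', hprod'⟩ := ih γ (by
          have := hsub.length_le
          omega)
        refine ⟨ω', ?_, hred', ?_⟩
        · exact List.Subset.trans hsub' (List.Subset.trans (hsub.subset) (by
            rw [concat_eq_append]; exact List.subset_append_left α [i]))
        · rw [hprod', hγprod, cs.wordProd_concat]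
      · obtain ⟨α', hsubα, hredα, hprodα⟩ := ih α (by omega)
        have hshort : α'.length < α.length := by
          have h1 : cs.length (cs.wordProd α) ≤ α.length := cs.length_wordProd_le α
          have h2 : cs.length (cs.wordProd α) ≠ α.length := hα
          have h3 : α'.length = cs.length (cs.wordProd α') := hredα.symm
          rw [hprodα] at h3
          omega
        obtain ⟨ω', hsub', hred', hprod'⟩ := ih (α'.concat i) (by simp; omega)
        refine ⟨ω', ?_, hred', ?_⟩
        · refine List.Subset.trans hsub' ?_
          rw [concat_eq_append, concat_eq_append]
          exact List.append_subset.mpr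
            ⟨List.Subset.trans hsubα (List.subset_append_left α [i]),
             List.subset_append_right α [i]⟩
        · rw [hprod', cs.wordProd_concat, cs.wordProd_concat, hprodα]

theorem exists_reduced_subword (ω : List B) :
    ∃ ω', ω' ⊆ ω ∧ cs.IsReduced ω' ∧ cs.wordProd ω' = cs.wordProd ω :=
  exists_reduced_subword_aux cs ω.length ω le_rfl

theorem wordProd_mem_parabolic {K : Set B} {ω : List B} (h : ∀ b ∈ ω, b ∈ K) :
    cs.wordProd ω ∈ cs.parabolic K := by
  induction ω with
  | nil => rw [cs.wordProd_nil]; exact one_mem _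
  | cons i ω ih =>
      rw [cs.wordProd_cons]
      exact mul_mem (Subgroup.subset_closure ⟨i, h i (by simp), rfl⟩)
        (ih (fun b hb => h b (by simp [hb])))

theorem exists_word_of_mem_parabolic {K : Set B} {w : W} (h : w ∈ cs.parabolic K) :
    ∃ ω : List B, (∀ b ∈ ω, b ∈ K) ∧ cs.wordProd ω = w := by
  induction h using Subgroup.closure_induction with
  | mem x hx =>
      obtain ⟨i, hi, rfl⟩ := hx
      exact ⟨[i], by simpa using hi, by simp⟩
  | one => exact ⟨[], by simp, by simp⟩
  | mul x y hx hy ihx ihy =>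
      obtain ⟨ω₁, h₁, rfl⟩ := ihx
      obtain ⟨ω₂, h₂, rfl⟩ := ihy
      refine ⟨ω₁ ++ ω₂, ?_, by rw [cs.wordProd_append]⟩
      intro b hb
      rcases List.mem_append.mp hb with h | h
      · exact h₁ b h
      · exact h₂ b h
  | inv x hx ihx =>
      obtain ⟨ω, h₁, rfl⟩ := ihx
      refine ⟨ω.reverse, ?_, by rw [cs.wordProd_reverse]⟩
      intro b hb
      exact h₁ b (List.mem_reverse.mp hb)

theorem exists_reduced_word_of_mem_parabolic {K : Set B} {w : W} (h : w ∈ cs.parabolic K) :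
    ∃ ω : List B, (∀ b ∈ ω, b ∈ K) ∧ cs.IsReduced ω ∧ cs.wordProd ω = w := by
  obtain ⟨ω, hK, hprod⟩ := exists_word_of_mem_parabolic cs h
  obtain ⟨ω', hsub, hred, hprod'⟩ := exists_reduced_subword cs ω
  exact ⟨ω', fun b hb => hK b (hsub hb), hred, by rw [hprod', hprod]⟩

end DC

namespace DC
open List CoxeterSystem

variable {B W : Type*} [Group W] {M : CoxeterMatrix B} (cs : CoxeterSystem M W)

theorem simple_mem_parabolic {J : Set B} {i : B} (hi : i ∈ J) :
    cs.simple i ∈ cs.parabolic J :=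
  Subgroup.subset_closure ⟨i, hi, rfl⟩

private theorem length_mul_right_aux (n : ℕ) {K : Set B} {w : W}
    (hmin : ∀ b ∈ cs.parabolic K, cs.length w ≤ cs.length (w * b)) :
    ∀ β : List B, β.length ≤ n → (∀ x ∈ β, x ∈ K) → cs.IsReduced β →
      cs.length (w * cs.wordProd β) = cs.length w + β.length := by
  induction n with
  | zero =>
      intro β hlen _ _
      have : β = [] := List.eq_nil_of_length_eq_zero (by omega)
      subst this
      simp
  | succ n ih =>
      intro β hlen hK hred
      rcases β.eq_nil_or_concat with rfl | ⟨α, i, rfl⟩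
      · simp
      have hlenc : (α.concat i).length = α.length + 1 := by simp
      have hαred : cs.IsReduced α := by
        have := CoxeterSystem.IsReduced.take hred α.length
        rwa [concat_eq_append, List.take_left] at this
      have hαK : ∀ x ∈ α, x ∈ K := fun x hx => hK x (by simp [concat_eq_append, hx])
      have hiK : i ∈ K := hK i (by simp [concat_eq_append])
      have ihα : cs.length (w * cs.wordProd α) = cs.length w + α.length :=
        ih α (by omega) hαK hαred
      rw [cs.wordProd_concat, hlenc, ← mul_assoc]
      rcases cs.length_mul_simple (w * cs.wordProd α) i with h | h
      · rw [h, ihα]; omega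
      -- descent case: derive a contradiction
      exfalso
      obtain ⟨δ, hδred, hδprod⟩ := cs.exists_reduced_word' w
      have hδα : cs.wordProd (δ ++ α) = w * cs.wordProd α := by
        rw [cs.wordProd_append, ← hδprod]
      have hδαred : cs.IsReduced (δ ++ α) := by
        rw [CoxeterSystem.IsReduced, hδα, length_append, ihα, ← hδred, hδprod]
      have hlt : cs.length (w * cs.wordProd α * cs.simple i)
          < cs.length (w * cs.wordProd α) := by omega
      obtain ⟨γ, hγsub, hγlen, hγprod⟩ := right_exchange cs hlt hδα
      obtain ⟨γ₁, γ₂, rfl, hγ₁, hγ₂⟩ := List.sublist_append_iff.mp hγsub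
      rw [length_append, length_append] at hγlen
      have hγ₁le := hγ₁.length_le
      have hγ₂le := hγ₂.length_le
      by_cases hcase : γ₂.length = α.length
      · -- γ₂ = α; contradicts minimality of w in its coset
        have hγ₂eq : γ₂ = α := hγ₂.eq_of_length hcase
        subst hγ₂eq
        have h1 : cs.wordProd γ₁ * cs.wordProd γ₂ = w * cs.wordProd γ₂ * cs.simple i := by
          rw [← cs.wordProd_append, hγprod]
        have h2 : cs.wordProd γ₁
            = w * (cs.wordProd γ₂ * cs.simple i * (cs.wordProd γ₂)⁻¹) := by
          rw [← mul_assoc, ← mul_assoc, ← h1, mul_assoc, mul_inv_cancel, mul_one]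
        have hmem : cs.wordProd γ₂ * cs.simple i * (cs.wordProd γ₂)⁻¹ ∈ cs.parabolic K :=
          mul_mem (mul_mem (wordProd_mem_parabolic cs hαK) (simple_mem_parabolic cs hiK))
            (inv_mem (wordProd_mem_parabolic cs hαK))
        have h3 := hmin _ hmem
        rw [← h2] at h3
        have h4 : cs.length (cs.wordProd γ₁) ≤ γ₁.length := cs.length_wordProd_le γ₁
        have hδlen : cs.length w = δ.length := by rw [hδprod]; exact hδred
        omega
      · -- γ₁ = δ; contradicts reducedness of α.concat i
        have hγ₁len : γ₁.length = δ.length := by omega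
        have hγ₁eq : γ₁ = δ := hγ₁.eq_of_length hγ₁len
        subst hγ₁eq
        have h1 : cs.wordProd γ₁ * cs.wordProd γ₂ = w * cs.wordProd α * cs.simple i := by
          rw [← cs.wordProd_append, hγprod]
        rw [← hδprod] at h1
        have h2 : cs.wordProd γ₂ = cs.wordProd α * cs.simple i := by
          have := congrArg (fun y => (cs.wordProd γ₁)⁻¹ * y) h1
          simpa [mul_assoc] using this
        have h3 : cs.length (cs.wordProd γ₂) ≤ γ₂.length := cs.length_wordProd_le γ₂
        have h4 : cs.length (cs.wordProd (α.concat i)) = α.length + 1 := by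
          rw [hred]; exact hlenc
        rw [cs.wordProd_concat, ← h2] at h4
        omega

theorem length_mul_right {K : Set B} {w : W}
    (hmin : ∀ b ∈ cs.parabolic K, cs.length w ≤ cs.length (w * b)) :
    ∀ b ∈ cs.parabolic K, cs.length (w * b) = cs.length w + cs.length b := by
  intro b hb
  obtain ⟨β, hβK, hβred, hβprod⟩ := exists_reduced_word_of_mem_parabolic cs hb
  have := length_mul_right_aux cs β.length hmin β le_rfl hβK hβred
  rw [hβprod] at this
  rw [this]
  have : cs.length b = β.length := by rw [← hβprod]; exact hβred
  omega

theorem length_mul_left {J : Set B} {w : W}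
    (hmin : ∀ a ∈ cs.parabolic J, cs.length w ≤ cs.length (a * w)) :
    ∀ a ∈ cs.parabolic J, cs.length (a * w) = cs.length a + cs.length w := by
  intro a ha
  have hmin' : ∀ b ∈ cs.parabolic J, cs.length w⁻¹ ≤ cs.length (w⁻¹ * b) := by
    intro b hb
    have h1 : (w⁻¹ * b)⁻¹ = b⁻¹ * w := by group
    have := hmin b⁻¹ (inv_mem hb)
    rw [← cs.length_inv (w⁻¹ * b), h1, cs.length_inv w]
    exact this
  have := length_mul_right cs hmin' a⁻¹ (inv_mem ha)
  have h2 : (w⁻¹ * a⁻¹) = (a * w)⁻¹ := by group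
  rw [h2, cs.length_inv, cs.length_inv, cs.length_inv] at this
  omega

theorem descent_swap {J K : Set B} {u : W}
    (hminJ : ∀ a ∈ cs.parabolic J, cs.length u ≤ cs.length (a * u))
    (hminK : ∀ b ∈ cs.parabolic K, cs.length u ≤ cs.length (u * b))
    {i : B} (hi : i ∈ J) {b : W} (hb : b ∈ cs.parabolic K)
    (hlt : cs.length (cs.simple i * (u * b)) < cs.length (u * b)) :
    ∃ b' ∈ cs.parabolic K, cs.simple i * (u * b) = u * b'
      ∧ cs.length b' + 1 = cs.length b := by
  obtain ⟨δ, hδred, hδprod⟩ := cs.exists_reduced_word' u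
  obtain ⟨β, hβK, hβred, hβprod⟩ := exists_reduced_word_of_mem_parabolic cs hb
  have hδlen : cs.length u = δ.length := by rw [hδprod]; exact hδred
  have hβlen : cs.length b = β.length := by rw [← hβprod]; exact hβred
  have hδβ : cs.wordProd (δ ++ β) = u * b := by
    rw [cs.wordProd_append, ← hδprod, hβprod]
  have hub : cs.length (u * b) = cs.length u + cs.length b := length_mul_right cs hminK b hb
  obtain ⟨γ, hγsub, hγlen, hγprod⟩ := left_exchange cs hlt hδβ
  obtain ⟨γ₁, γ₂, rfl, hγ₁, hγ₂⟩ := List.sublist_append_iff.mp hγsub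
  rw [length_append, length_append] at hγlen
  have hγ₁le := hγ₁.length_le
  have hγ₂le := hγ₂.length_le
  by_cases hcase : γ₁.length = δ.length
  · -- γ₁ = δ : the new coset representative
    have hγ₁eq : γ₁ = δ := hγ₁.eq_of_length hcase
    subst hγ₁eq
    refine ⟨cs.wordProd γ₂, wordProd_mem_parabolic cs (fun x hx => hβK x (hγ₂.subset hx)),
      ?_, ?_⟩
    · rw [← hγprod, cs.wordProd_append, ← hδprod]
    · have h1 : u * cs.wordProd γ₂ = cs.simple i * (u * b) := by
        rw [← hγprod, cs.wordProd_append, ← hδprod]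
      have h2 : cs.length (u * cs.wordProd γ₂)
          = cs.length u + cs.length (cs.wordProd γ₂) :=
        length_mul_right cs hminK _
          (wordProd_mem_parabolic cs (fun x hx => hβK x (hγ₂.subset hx)))
      rw [h1] at h2
      have hexact : cs.length (cs.simple i * (u * b)) + 1 = cs.length (u * b) := by
        rcases cs.length_simple_mul (u * b) i with h | h
        · omega
        · exact h
      omega
  · -- γ₂ = β : contradiction with minimality of u
    exfalso
    have hγ₂len : γ₂.length = β.length := by omega
    have hγ₂eq : γ₂ = β := hγ₂.eq_of_length hγ₂len
    subst hγ₂eq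
    have h1 : cs.wordProd γ₁ * b = cs.simple i * (u * b) := by
      rw [← hβprod, ← cs.wordProd_append, hγprod, hβprod]
    have h2 : cs.wordProd γ₁ = cs.simple i * u := by
      have := congrArg (fun y => y * b⁻¹) h1
      simpa [mul_assoc] using this
    have h3 := hminJ (cs.simple i) (simple_mem_parabolic cs hi)
    have h4 : cs.length (cs.wordProd γ₁) ≤ γ₁.length := cs.length_wordProd_le γ₁
    rw [h2] at h4
    omega

open scoped Classical in
theorem min_unique {J K : Set B} {u v : W} (hu : cs.IsMinDoubleCosetRep J K u)
    (hv : cs.IsMinDoubleCosetRep J K v) {a b : W} (ha : a ∈ cs.parabolic J)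
    (hb : b ∈ cs.parabolic K) (heq : v = a * u * b) : v = u := by
  have huJ : ∀ c ∈ cs.parabolic J, cs.length u ≤ cs.length (c * u) := by
    intro c hc
    have := hu c hc 1 (one_mem _)
    rwa [mul_one] at this
  have huK : ∀ c ∈ cs.parabolic K, cs.length u ≤ cs.length (u * c) := by
    intro c hc
    have := hu 1 (one_mem _) c hc
    rwa [one_mul] at this
  have hluv : cs.length u = cs.length v := by
    have h1 : cs.length u ≤ cs.length v := by
      have := hu a ha b hb
      rwa [← heq] at this
    have h2 : cs.length v ≤ cs.length u := by
      have := hv a⁻¹ (inv_mem ha) b⁻¹ (inv_mem hb)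
      have h3 : a⁻¹ * v * b⁻¹ = u := by rw [heq]; group
      rwa [h3] at this
    omega
  -- choose a representation minimizing the length sum
  set Q : ℕ → Prop := fun n => ∃ a₀ b₀, a₀ ∈ cs.parabolic J ∧ b₀ ∈ cs.parabolic K ∧
    v = a₀ * u * b₀ ∧ cs.length a₀ + cs.length b₀ = n with hQdef
  have hQex : ∃ n, Q n := ⟨_, a, b, ha, hb, heq, rfl⟩
  obtain ⟨a₀, b₀, ha₀, hb₀, heq₀, hsum₀⟩ := Nat.find_spec hQex
  by_cases ha₀1 : a₀ = 1
  · subst ha₀1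
    rw [one_mul] at heq₀
    have h1 : cs.length v = cs.length u + cs.length b₀ := by
      rw [heq₀]; exact length_mul_right cs huK b₀ hb₀
    have h2 : cs.length b₀ = 0 := by omega
    have h3 : b₀ = 1 := cs.length_eq_zero_iff.mp h2
    rw [heq₀, h3, mul_one]
  by_cases hb₀1 : b₀ = 1
  · subst hb₀1
    rw [mul_one] at heq₀
    have h1 : cs.length v = cs.length a₀ + cs.length u := by
      rw [heq₀]; exact length_mul_left cs huJ a₀ ha₀
    have h2 : cs.length a₀ = 0 := by omega
    have h3 : a₀ = 1 := cs.length_eq_zero_iff.mp h2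
    rw [heq₀, h3, one_mul]
  exfalso
  -- both a₀ ≠ 1 and b₀ ≠ 1 : derive a contradiction
  obtain ⟨α, hαJ, hαred, hαprod⟩ := exists_reduced_word_of_mem_parabolic cs ha₀
  obtain ⟨β, hβK, hβred, hβprod⟩ := exists_reduced_word_of_mem_parabolic cs hb₀
  have hα0 : α ≠ [] := by rintro rfl; exact ha₀1 (by rw [← hαprod, cs.wordProd_nil])
  have hβ0 : β ≠ [] := by rintro rfl; exact hb₀1 (by rw [← hβprod, cs.wordProd_nil])
  -- J-side analysis
  rcases α.eq_nil_or_concat with rfl | ⟨α', i, rfl⟩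
  · exact hα0 rfl
  have hiJ : i ∈ J := hαJ i (by simp [concat_eq_append])
  have hα'J : ∀ x ∈ α', x ∈ J := fun x hx => hαJ x (by simp [concat_eq_append, hx])
  have hα'red : cs.IsReduced α' := by
    have := CoxeterSystem.IsReduced.take hαred α'.length
    rwa [concat_eq_append, List.take_left] at this
  have ha' : cs.wordProd α' ∈ cs.parabolic J := wordProd_mem_parabolic cs hα'J
  have hla₀ : cs.length a₀ = α'.length + 1 := by
    rw [← hαprod, hαred]; simp
  have hla' : cs.length (cs.wordProd α') = α'.length := hα'red
  have ha₀split : a₀ = cs.wordProd α' * cs.simple i := by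
    rw [← hαprod, cs.wordProd_concat]
  have hJside : cs.length a₀ ≥ cs.length b₀ + 2 := by
    rcases cs.length_simple_mul (u * b₀) i with hasc | hdesc
    · -- ascent case: gives the length inequality
      have h1 : cs.length (u * b₀) = cs.length u + cs.length b₀ :=
        length_mul_right cs huK b₀ hb₀
      have h2 : v = cs.wordProd α' * (cs.simple i * (u * b₀)) := by
        rw [heq₀, ha₀split]; group
      have h3 := cs.length_mul_ge_length_sub_length' (cs.wordProd α')
        (cs.simple i * (u * b₀))
      rw [← h2] at h3
      rw [hasc, h1] at h3
      omega
    · -- descent case: contradicts minimality of the chosen representation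
      exfalso
      have hlt : cs.length (cs.simple i * (u * b₀)) < cs.length (u * b₀) := by omega
      obtain ⟨b', hb', hswap, hlb'⟩ := descent_swap cs huJ huK hiJ hb₀ hlt
      have hrep : v = cs.wordProd α' * u * b' := by
        have hbr : cs.wordProd α' * cs.simple i * u * b₀
            = cs.wordProd α' * (cs.simple i * (u * b₀)) := by group
        rw [heq₀, ha₀split, hbr, hswap, ← mul_assoc]
      have hQn : Q (cs.length (cs.wordProd α') + cs.length b') :=
        ⟨_, _, ha', hb', hrep, rfl⟩
      have hless : cs.length (cs.wordProd α') + cs.length b' < Nat.find hQex := by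
        omega
      exact absurd hQn (Nat.find_min hQex hless)
  -- K-side analysis
  rcases hβeq : β with _ | ⟨k, β''⟩
  · exact hβ0 hβeq
  subst hβeq
  have hkK : k ∈ K := hβK k (by simp)
  have hβ''K : ∀ x ∈ β'', x ∈ K := fun x hx => hβK x (by simp [hx])
  have hβ''red : cs.IsReduced β'' := by
    have := CoxeterSystem.IsReduced.drop hβred 1
    simpa using this
  have hb'' : cs.wordProd β'' ∈ cs.parabolic K := wordProd_mem_parabolic cs hβ''K
  have hlb₀ : cs.length b₀ = β''.length + 1 := by
    rw [← hβprod, hβred]; simp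
  have hlb'' : cs.length (cs.wordProd β'') = β''.length := hβ''red
  have hb₀split : b₀ = cs.simple k * cs.wordProd β'' := by
    rw [← hβprod, cs.wordProd_cons]
  have huK' : ∀ c ∈ cs.parabolic K, cs.length u⁻¹ ≤ cs.length (c * u⁻¹) := by
    intro c hc
    calc cs.length u⁻¹ = cs.length u := cs.length_inv u
      _ ≤ cs.length (u * c⁻¹) := huK c⁻¹ (inv_mem hc)
      _ = cs.length ((c * u⁻¹)⁻¹) := by rw [mul_inv_rev, inv_inv]
      _ = cs.length (c * u⁻¹) := cs.length_inv _
  have huJ' : ∀ c ∈ cs.parabolic J, cs.length u⁻¹ ≤ cs.length (u⁻¹ * c) := by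
    intro c hc
    calc cs.length u⁻¹ = cs.length u := cs.length_inv u
      _ ≤ cs.length (c⁻¹ * u) := huJ c⁻¹ (inv_mem hc)
      _ = cs.length ((u⁻¹ * c)⁻¹) := by rw [mul_inv_rev, inv_inv]
      _ = cs.length (u⁻¹ * c) := cs.length_inv _
  have hKside : cs.length b₀ ≥ cs.length a₀ + 2 := by
    rcases cs.length_simple_mul (u⁻¹ * a₀⁻¹) k with hasc | hdesc
    · -- ascent case
      have h1 : cs.length (u⁻¹ * a₀⁻¹) = cs.length u⁻¹ + cs.length a₀⁻¹ :=
        length_mul_right cs huJ' a₀⁻¹ (inv_mem ha₀)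
      have hbinv : b₀⁻¹ = (cs.wordProd β'')⁻¹ * cs.simple k := by
        rw [hb₀split, mul_inv_rev, cs.inv_simple]
      have h2 : v⁻¹ = (cs.wordProd β'')⁻¹ * (cs.simple k * (u⁻¹ * a₀⁻¹)) := by
        rw [heq₀, mul_inv_rev, mul_inv_rev, hbinv]
        group
      have h3 := cs.length_mul_ge_length_sub_length' ((cs.wordProd β'')⁻¹)
        (cs.simple k * (u⁻¹ * a₀⁻¹))
      rw [← h2] at h3
      rw [hasc, h1] at h3
      have h4 : cs.length v⁻¹ = cs.length v := cs.length_inv v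
      have h5 : cs.length u⁻¹ = cs.length u := cs.length_inv u
      have h6 : cs.length a₀⁻¹ = cs.length a₀ := cs.length_inv a₀
      have h7 : cs.length (cs.wordProd β'')⁻¹ = cs.length (cs.wordProd β'') :=
        cs.length_inv _
      omega
    · -- descent case: contradicts minimality of the chosen representation
      exfalso
      have hlt : cs.length (cs.simple k * (u⁻¹ * a₀⁻¹)) < cs.length (u⁻¹ * a₀⁻¹) := by
        omega
      obtain ⟨a'', ha'', hswap, hla''⟩ :=
        descent_swap cs huK' huJ' hkK (inv_mem ha₀) hlt
      have hswap' : a₀ * u * cs.simple k = a''⁻¹ * u := by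
        have h0 : a'' = u * (cs.simple k * (u⁻¹ * a₀⁻¹)) := by rw [hswap]; group
        have h1 : a''⁻¹ * u = a₀ * u * (cs.simple k)⁻¹ := by rw [h0]; group
        rw [h1, cs.inv_simple]
      have hrep : v = a''⁻¹ * u * cs.wordProd β'' := by
        rw [heq₀, hb₀split, ← mul_assoc, hswap']
      have hQn : Q (cs.length a''⁻¹ + cs.length (cs.wordProd β'')) :=
        ⟨_, _, inv_mem ha'', hb'', hrep, rfl⟩
      have h6 : cs.length a''⁻¹ = cs.length a'' := cs.length_inv a''
      have h7 : cs.length a₀⁻¹ = cs.length a₀ := cs.length_inv a₀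
      have hless : cs.length a''⁻¹ + cs.length (cs.wordProd β'') < Nat.find hQex := by
        omega
      exact absurd hQn (Nat.find_min hQex hless)
  omega

end DC

namespace DC
open List CoxeterSystem

variable {B W : Type*} [Group W] {M : CoxeterMatrix B} (cs : CoxeterSystem M W)

open scoped Classical in
theorem exists_min_rep (J K : Set B) (x : W) :
    ∃ w a b, a ∈ cs.parabolic J ∧ b ∈ cs.parabolic K ∧ w = a * x * b ∧
      cs.IsMinDoubleCosetRep J K w := by
  set Q : ℕ → Prop := fun n => ∃ a b, a ∈ cs.parabolic J ∧ b ∈ cs.parabolic K ∧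
    cs.length (a * x * b) = n with hQdef
  have hQex : ∃ n, Q n := ⟨cs.length x, 1, 1, one_mem _, one_mem _, by rw [one_mul, mul_one]⟩
  obtain ⟨a, b, ha, hb, hlen⟩ := Nat.find_spec hQex
  refine ⟨a * x * b, a, b, ha, hb, rfl, ?_⟩
  intro a' ha' b' hb'
  have h1 : a' * (a * x * b) * b' = (a' * a) * x * (b * b') := by group
  have h2 : Q (cs.length ((a' * a) * x * (b * b'))) :=
    ⟨a' * a, b * b', mul_mem ha' ha, mul_mem hb hb', rfl⟩
  calc cs.length (a * x * b) = Nat.find hQex := hlen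
    _ ≤ cs.length ((a' * a) * x * (b * b')) := Nat.find_min' hQex h2
    _ = cs.length (a' * (a * x * b) * b') := by rw [h1]

end DC

/-- The orbits of the left `W_J`-action on `W/W_K` are in natural bijection with the set
`ᴶWᴷ` of minimal-length `(W_J, W_K)`-double coset representatives (via `w ↦` the orbit of
the coset `w·W_K`); moreover, the orbit of `w·W_K`, for `w ∈ ᴶWᴷ`, is isomorphic as a
`W_J`-set to `W_J/(W_J ∩ w·W_K·w⁻¹)`. -/
theorem orbits_of_parabolic_on_cosets
    {B W : Type*} [Group W] {M : CoxeterMatrix B} (cs : CoxeterSystem M W)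
    (J K : Set B) :
    Function.Bijective
      (fun u : {w : W // cs.IsMinDoubleCosetRep J K w} =>
        Quotient.mk (MulAction.orbitRel (cs.parabolic J) (W ⧸ cs.parabolic K))
          (QuotientGroup.mk u.1)) ∧
    ∀ w : W, cs.IsMinDoubleCosetRep J K w →
      ∃ e : MulAction.orbit (cs.parabolic J) (QuotientGroup.mk w : W ⧸ cs.parabolic K) ≃
          (cs.parabolic J) ⧸ ((cs.parabolic J ⊓ (cs.parabolic K).map
            (MulAut.conj w).toMonoidHom).subgroupOf (cs.parabolic J)),
        ∀ (g : cs.parabolic J) (x), e (g • x) = g • e x := by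
  constructor
  · constructor
    · -- injectivity
      rintro ⟨u, hu⟩ ⟨v, hv⟩ h
      simp only at h
      have h2 := Quotient.exact h
      have h2' : (QuotientGroup.mk u : W ⧸ cs.parabolic K)
          ∈ MulAction.orbit (cs.parabolic J) (QuotientGroup.mk v : W ⧸ cs.parabolic K) := h2
      obtain ⟨g, hg⟩ := h2'
      -- hg : g • (mk v) = mk u
      have hg' : (QuotientGroup.mk ((g : W) * v) : W ⧸ cs.parabolic K)
          = QuotientGroup.mk u := hg
      rw [QuotientGroup.eq] at hg'
      -- hg' : ((g:W) * v)⁻¹ * u ∈ parabolic K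
      have heq : u = (g : W) * v * (((g : W) * v)⁻¹ * u) := by group
      have := DC.min_unique cs hv hu g.2 hg' heq
      exact Subtype.ext this
    · -- surjectivity
      intro q
      induction q using Quotient.inductionOn with
      | h y =>
        induction y using QuotientGroup.induction_on with
        | H x =>
          obtain ⟨w, a, b, ha, hb, hw, hmin⟩ := DC.exists_min_rep cs J K x
          refine ⟨⟨w, hmin⟩, ?_⟩
          simp only
          apply Quotient.sound
          show (QuotientGroup.mk w : W ⧸ cs.parabolic K)
            ∈ MulAction.orbit (cs.parabolic J) (QuotientGroup.mk x : W ⧸ cs.parabolic K)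
          refine ⟨⟨a, ha⟩, ?_⟩
          have h1 : (QuotientGroup.mk (a * x) : W ⧸ cs.parabolic K)
              = QuotientGroup.mk w := by
            rw [QuotientGroup.eq]
            have : (a * x)⁻¹ * w = b := by rw [hw]; group
            rw [this]; exact hb
          exact h1
  · -- part 2
    intro w _
    have hstab : MulAction.stabilizer (cs.parabolic J)
          (QuotientGroup.mk w : W ⧸ cs.parabolic K)
        = ((cs.parabolic J ⊓ (cs.parabolic K).map
            (MulAut.conj w).toMonoidHom).subgroupOf (cs.parabolic J)) := by
      ext g
      rw [MulAction.mem_stabilizer_iff, Subgroup.mem_subgroupOf, Subgroup.mem_inf]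
      have hsmul : g • (QuotientGroup.mk w : W ⧸ cs.parabolic K)
          = QuotientGroup.mk ((g : W) * w) := rfl
      rw [hsmul, QuotientGroup.eq]
      constructor
      · intro hmem
        refine ⟨g.2, ?_⟩
        rw [Subgroup.mem_map]
        refine ⟨w⁻¹ * (g : W) * w, ?_, ?_⟩
        · have : (((g : W) * w)⁻¹ * w)⁻¹ = w⁻¹ * (g : W) * w := by group
          rw [← this]
          exact inv_mem hmem
        · simp only [MulEquiv.coe_toMonoidHom, MulAut.conj_apply]
          group
      · rintro ⟨-, hmem⟩
        rw [Subgroup.mem_map] at hmem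
        obtain ⟨y, hy, hyeq⟩ := hmem
        simp only [MulEquiv.coe_toMonoidHom, MulAut.conj_apply] at hyeq
        have : ((g : W) * w)⁻¹ * w = y⁻¹ := by rw [← hyeq]; group
        rw [this]
        exact inv_mem hy
    rw [← hstab]
    refine ⟨MulAction.orbitEquivQuotientStabilizer (cs.parabolic J) _, ?_⟩
    set e := MulAction.orbitEquivQuotientStabilizer (cs.parabolic J)
      (QuotientGroup.mk w : W ⧸ cs.parabolic K) with he
    have key : ∀ (g : cs.parabolic J) (q), e.symm (g • q) = g • e.symm q := by
      intro g q
      induction q using QuotientGroup.induction_on with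
      | H h =>
        rw [MulAction.Quotient.smul_mk, smul_eq_mul]
        apply Subtype.ext
        rw [MulAction.orbitEquivQuotientStabilizer_symm_apply,
          MulAction.orbit.coe_smul,
          MulAction.orbitEquivQuotientStabilizer_symm_apply, mul_smul]
    intro g x
    apply e.symm.injective
    rw [Equiv.symm_apply_apply, key, Equiv.symm_apply_apply]
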